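/- Let β ∈ (0,2), p ∈ (0, β), r ∈ (p, 2], and ε > 0. With Φ_ρ(x) = a_p^{-1} ∫_ℝ (1 − cos(ux)) e^{−ρ^β|u|^β}|u|^{−1−p} du, there exists K_ε such that for all ρ₁, ρ₂ ≥ ε and all x ∈ ℝ: |Φ_{ρ₁}(x) − Φ_{ρ₂}(x)| ≤ K_ε |ρ₁^β − ρ₂^β| · |x|^r. -/

import Mathlib

open MeasureTheory Real

section aux
open Set

lemma intOn_aux {s c β : ℝ} (hs : -1 < s) (hc : 0 < c) (hβ : 0 < β) :
    IntegrableOn (fun x : ℝ => x ^ s * Real.exp (-c * x ^ β)) (Ioi 0) := by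
  have hq : (-1 : ℝ) < (s + 1) / β - 1 := by
    have : 0 < (s + 1) / β := div_pos (by linarith) hβ
    linarith
  have base : IntegrableOn (fun y : ℝ => y ^ ((s + 1) / β - 1) * Real.exp (-c * y)) (Ioi 0) := by
    have := integrableOn_rpow_mul_exp_neg_mul_rpow hq zero_lt_one hc
    simpa using this
  have key := (integrableOn_Ioi_comp_rpow_iff'
    (fun y : ℝ => y ^ ((s + 1) / β - 1) * Real.exp (-c * y)) hβ.ne').2 base
  refine key.congr_fun (fun x hx => ?_) measurableSet_Ioi
  have hx0 : (0 : ℝ) < x := hx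
  have h1 : (x ^ β) ^ ((s + 1) / β - 1) = x ^ (β * ((s + 1) / β - 1)) :=
    (Real.rpow_mul hx0.le _ _).symm
  have h2 : β * ((s + 1) / β - 1) = s + 1 - β := by
    field_simp
  simp only [smul_eq_mul, h1, h2]
  rw [← mul_assoc, ← Real.rpow_add hx0]
  ring_nf

lemma int_aux {s c β : ℝ} (hs : -1 < s) (hc : 0 < c) (hβ : 0 < β) :
    Integrable (fun u : ℝ => |u| ^ s * Real.exp (-c * |u| ^ β)) := by
  set g : ℝ → ℝ := fun u => |u| ^ s * Real.exp (-c * |u| ^ β) with hg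
  have hIoi : IntegrableOn g (Ioi 0) := by
    refine (intOn_aux hs hc hβ).congr_fun (fun x hx => ?_) measurableSet_Ioi
    simp [hg, abs_of_pos (mem_Ioi.mp hx)]
  have hind : Integrable ((Ioi (0:ℝ)).indicator g) :=
    (integrable_indicator_iff measurableSet_Ioi).2 hIoi
  have hIio : IntegrableOn g (Iio 0) := by
    refine (integrable_indicator_iff measurableSet_Iio).1 ?_
    have hneg : Integrable (fun x : ℝ => ((Ioi (0:ℝ)).indicator g) (-x)) :=
      hind.comp_neg
    refine hneg.congr (Filter.Eventually.of_forall fun x => ?_)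
    by_cases hx : x < 0
    · simp [Set.indicator_of_mem, hx, Set.indicator_of_mem (mem_Ioi.mpr (neg_pos.mpr hx)), hg]
    · have : ¬ (-x ∈ Ioi (0:ℝ)) := by simp; linarith [not_lt.mp hx]
      simp [Set.indicator_of_notMem, this, hx]
  have hIci : IntegrableOn g (Ici 0) := by
    rwa [integrableOn_Ici_iff_integrableOn_Ioi]
  have := hIio.union hIci
  rwa [Iio_union_Ici, integrableOn_univ] at this

lemma cos_bound {r : ℝ} (hr0 : 0 < r) (hr2 : r ≤ 2) (t : ℝ) :
    1 - Real.cos t ≤ 2 * |t| ^ r := by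
  rcases le_or_gt 1 |t| with h | h
  · have h1 : (1:ℝ) ≤ |t| ^ r := Real.one_le_rpow h hr0.le
    have h2 : -1 ≤ Real.cos t := Real.neg_one_le_cos t
    nlinarith
  · rcases eq_or_ne t 0 with rfl | ht
    · simp [Real.rpow_nonneg]
    · have h1 : 1 - Real.cos t ≤ t ^ 2 / 2 := by
        have := Real.one_sub_sq_div_two_le_cos (x := t)
        linarith
      have habs : (0:ℝ) < |t| := abs_pos.mpr ht
      have h2 : |t| ^ (2:ℝ) ≤ |t| ^ r :=
        Real.rpow_le_rpow_of_exponent_ge habs h.le hr2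
      have h3 : t ^ 2 = |t| ^ (2:ℝ) := by
        rw [Real.rpow_two, sq_abs]
      have h4 : (0:ℝ) ≤ |t| ^ r := Real.rpow_nonneg (abs_nonneg t) r
      linarith

lemma exp_diff_bound {c a b t : ℝ} (ha : c ≤ a) (hb : c ≤ b) (ht : 0 ≤ t) :
    |Real.exp (-a * t) - Real.exp (-b * t)| ≤ |a - b| * t * Real.exp (-c * t) := by
  have key : ∀ a b : ℝ, c ≤ a → a ≤ b →
      Real.exp (-a * t) - Real.exp (-b * t) ≤ (b - a) * t * Real.exp (-c * t) := by
    intro a b hca hab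
    have h1 : Real.exp (-b * t) = Real.exp (-a * t) * Real.exp (-((b - a) * t)) := by
      rw [← Real.exp_add]; ring_nf
    have h2 : 1 - Real.exp (-((b - a) * t)) ≤ (b - a) * t := by
      have := Real.add_one_le_exp (-((b - a) * t))
      linarith
    have h3 : Real.exp (-a * t) ≤ Real.exp (-c * t) :=
      Real.exp_le_exp.mpr (by nlinarith)
    have h4 : 0 ≤ (b - a) * t := mul_nonneg (by linarith) ht
    calc Real.exp (-a * t) - Real.exp (-b * t)
        = Real.exp (-a * t) * (1 - Real.exp (-((b - a) * t))) := by rw [h1]; ring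
      _ ≤ Real.exp (-a * t) * ((b - a) * t) :=
          mul_le_mul_of_nonneg_left h2 (Real.exp_nonneg _)
      _ ≤ Real.exp (-c * t) * ((b - a) * t) := mul_le_mul_of_nonneg_right h3 h4
      _ = (b - a) * t * Real.exp (-c * t) := by ring
  rcases le_total a b with hab | hab
  · rw [abs_of_nonneg (sub_nonneg.mpr (Real.exp_le_exp.mpr (by nlinarith : -b*t ≤ -a*t))),
      abs_of_nonpos (by linarith : a - b ≤ 0)]
    linarith [key a b ha hab]
  · rw [abs_of_nonpos (sub_nonpos.mpr (Real.exp_le_exp.mpr (by nlinarith : -a*t ≤ -b*t))),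
      abs_of_nonneg (by linarith : 0 ≤ a - b)]
    linarith [key b a hb hab]

end aux

/-- `a_p = ∫ (1 - cos u)|u|^{-1-p} du`. -/
noncomputable def aConst (p : ℝ) : ℝ :=
  ∫ u : ℝ, (1 - Real.cos u) * |u| ^ (-1 - p)

/-- `Φ_ρ(x) = a_p⁻¹ ∫ (1 - cos(ux)) e^{-ρ^β |u|^β} |u|^{-1-p} du`. -/
noncomputable def Phi (β p ρ : ℝ) : ℝ → ℝ := fun x =>
  (aConst p)⁻¹ *
    ∫ u : ℝ, (1 - Real.cos (u * x)) * Real.exp (-(ρ ^ β) * |u| ^ β) * |u| ^ (-1 - p)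

/-- For `β ∈ (0,2)`, `p ∈ (0,β)`, `r ∈ (p,2]` and `ε > 0` there is `K_ε` with
`|Φ_{ρ₁}(x) - Φ_{ρ₂}(x)| ≤ K_ε |ρ₁^β - ρ₂^β| |x|^r` for all `ρ₁, ρ₂ ≥ ε`, `x ∈ ℝ`. -/
theorem stmt_12 (β p r ε : ℝ) (hβ : β ∈ Set.Ioo (0 : ℝ) 2) (hp : p ∈ Set.Ioo (0 : ℝ) β)
    (hr : r ∈ Set.Ioc p 2) (hε : 0 < ε) :
    ∃ K : ℝ, 0 < K ∧ ∀ ρ₁ ρ₂ : ℝ, ε ≤ ρ₁ → ε ≤ ρ₂ → ∀ x : ℝ,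
      |Phi β p ρ₁ x - Phi β p ρ₂ x| ≤ K * |ρ₁ ^ β - ρ₂ ^ β| * |x| ^ r := by
  obtain ⟨hβ0, hβ2⟩ := hβ
  obtain ⟨hp0, hpβ⟩ := hp
  obtain ⟨hrp, hr2⟩ := hr
  have hr0 : 0 < r := hp0.trans hrp
  set c : ℝ := ε ^ β with hc_def
  have hc : 0 < c := Real.rpow_pos_of_pos hε β
  set s : ℝ := β + r - 1 - p with hs_def
  have hs : (-1 : ℝ) < s := by simp only [hs_def]; linarith
  have hs2 : (-1 : ℝ) < r - 1 - p := by linarith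
  set C : ℝ := ∫ u : ℝ, |u| ^ s * Real.exp (-c * |u| ^ β) with hC_def
  have hC : 0 ≤ C :=
    integral_nonneg fun u => mul_nonneg (Real.rpow_nonneg (abs_nonneg u) _) (Real.exp_nonneg _)
  have hintC : Integrable (fun u : ℝ => |u| ^ s * Real.exp (-c * |u| ^ β)) := int_aux hs hc hβ0
  refine ⟨2 * |(aConst p)⁻¹| * C + 1, by positivity, ?_⟩
  intro ρ₁ ρ₂ hρ₁ hρ₂ x
  set f : ℝ → ℝ → ℝ := fun ρ u =>
    (1 - Real.cos (u * x)) * Real.exp (-(ρ ^ β) * |u| ^ β) * |u| ^ (-1 - p) with hf_def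
  have hA₁ : c ≤ ρ₁ ^ β := Real.rpow_le_rpow hε.le hρ₁ hβ0.le
  have hA₂ : c ≤ ρ₂ ^ β := Real.rpow_le_rpow hε.le hρ₂ hβ0.le
  have hmeas : ∀ ρ : ℝ, AEStronglyMeasurable (f ρ) volume := by
    intro ρ
    apply Measurable.aestronglyMeasurable
    fun_prop
  have hcosnn : ∀ u : ℝ, 0 ≤ 1 - Real.cos (u * x) := fun u => by
    linarith [Real.cos_le_one (u * x)]
  have hfnn : ∀ ρ u, 0 ≤ f ρ u := fun ρ u =>
    mul_nonneg (mul_nonneg (hcosnn u) (Real.exp_nonneg _)) (Real.rpow_nonneg (abs_nonneg u) _)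
  -- pointwise bound for integrability
  have hbd : ∀ ρ : ℝ, c ≤ ρ ^ β → ∀ u : ℝ,
      ‖f ρ u‖ ≤ 2 * |x| ^ r * (|u| ^ (r - 1 - p) * Real.exp (-c * |u| ^ β)) := by
    intro ρ hρ u
    rw [Real.norm_eq_abs, abs_of_nonneg (hfnn ρ u)]
    rcases eq_or_ne u 0 with rfl | hu
    · simp [hf_def]
      positivity
    · have habs : (0:ℝ) < |u| := abs_pos.mpr hu
      have h1 : 1 - Real.cos (u * x) ≤ 2 * (|u| ^ r * |x| ^ r) := by
        have := cos_bound hr0 hr2 (u * x)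
        rwa [abs_mul, Real.mul_rpow (abs_nonneg u) (abs_nonneg x)] at this
      have h2 : Real.exp (-(ρ ^ β) * |u| ^ β) ≤ Real.exp (-c * |u| ^ β) :=
        Real.exp_le_exp.mpr (by nlinarith [Real.rpow_nonneg (abs_nonneg u) β])
      have h3 : |u| ^ r * |u| ^ (-1 - p) = |u| ^ (r - 1 - p) := by
        rw [← Real.rpow_add habs]; ring_nf
      calc f ρ u ≤ (2 * (|u| ^ r * |x| ^ r)) * Real.exp (-c * |u| ^ β) * |u| ^ (-1 - p) := by
            apply mul_le_mul_of_nonneg_right _ (Real.rpow_nonneg (abs_nonneg u) _)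
            exact mul_le_mul h1 h2 (Real.exp_nonneg _) (by positivity)
        _ = 2 * |x| ^ r * ((|u| ^ r * |u| ^ (-1 - p)) * Real.exp (-c * |u| ^ β)) := by ring
        _ = 2 * |x| ^ r * (|u| ^ (r - 1 - p) * Real.exp (-c * |u| ^ β)) := by rw [h3]
  have hint : ∀ ρ : ℝ, c ≤ ρ ^ β → Integrable (f ρ) := by
    intro ρ hρ
    exact Integrable.mono' ((int_aux hs2 hc hβ0).const_mul (2 * |x| ^ r)) (hmeas ρ)
      (Filter.Eventually.of_forall (hbd ρ hρ))
  -- difference bound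
  have hdiff : ∀ u : ℝ, ‖f ρ₁ u - f ρ₂ u‖ ≤
      (2 * |x| ^ r * |ρ₁ ^ β - ρ₂ ^ β|) * (|u| ^ s * Real.exp (-c * |u| ^ β)) := by
    intro u
    rcases eq_or_ne u 0 with rfl | hu
    · simp [hf_def]
      positivity
    · have habs : (0:ℝ) < |u| := abs_pos.mpr hu
      have heq : f ρ₁ u - f ρ₂ u = ((1 - Real.cos (u * x)) * |u| ^ (-1 - p)) *
          (Real.exp (-(ρ₁ ^ β) * |u| ^ β) - Real.exp (-(ρ₂ ^ β) * |u| ^ β)) := by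
        simp only [hf_def]; ring
      have hgnn : 0 ≤ (1 - Real.cos (u * x)) * |u| ^ (-1 - p) :=
        mul_nonneg (hcosnn u) (Real.rpow_nonneg (abs_nonneg u) _)
      have hexp := exp_diff_bound hA₁ hA₂ (Real.rpow_nonneg (abs_nonneg u) β)
      have h1 : 1 - Real.cos (u * x) ≤ 2 * (|u| ^ r * |x| ^ r) := by
        have := cos_bound hr0 hr2 (u * x)
        rwa [abs_mul, Real.mul_rpow (abs_nonneg u) (abs_nonneg x)] at this
      rw [Real.norm_eq_abs, heq, abs_mul, abs_of_nonneg hgnn]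
      calc ((1 - Real.cos (u * x)) * |u| ^ (-1 - p)) *
            |Real.exp (-(ρ₁ ^ β) * |u| ^ β) - Real.exp (-(ρ₂ ^ β) * |u| ^ β)|
          ≤ ((1 - Real.cos (u * x)) * |u| ^ (-1 - p)) *
            (|ρ₁ ^ β - ρ₂ ^ β| * |u| ^ β * Real.exp (-c * |u| ^ β)) :=
            mul_le_mul_of_nonneg_left hexp hgnn
        _ ≤ ((2 * (|u| ^ r * |x| ^ r)) * |u| ^ (-1 - p)) *
            (|ρ₁ ^ β - ρ₂ ^ β| * |u| ^ β * Real.exp (-c * |u| ^ β)) := by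
            apply mul_le_mul_of_nonneg_right _ (by positivity)
            exact mul_le_mul_of_nonneg_right h1 (Real.rpow_nonneg (abs_nonneg u) _)
        _ = (2 * |x| ^ r * |ρ₁ ^ β - ρ₂ ^ β|) *
            ((|u| ^ r * |u| ^ (-1 - p) * |u| ^ β) * Real.exp (-c * |u| ^ β)) := by ring
        _ = (2 * |x| ^ r * |ρ₁ ^ β - ρ₂ ^ β|) * (|u| ^ s * Real.exp (-c * |u| ^ β)) := by
            rw [← Real.rpow_add habs, ← Real.rpow_add habs,
              show r + (-1 - p) + β = s by simp only [hs_def]; ring]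
  -- assemble
  have hsub : (∫ u : ℝ, f ρ₁ u) - (∫ u : ℝ, f ρ₂ u) = ∫ u : ℝ, (f ρ₁ u - f ρ₂ u) :=
    (integral_sub (hint ρ₁ hA₁) (hint ρ₂ hA₂)).symm
  have hnorm : ‖∫ u : ℝ, (f ρ₁ u - f ρ₂ u)‖ ≤
      (2 * |x| ^ r * |ρ₁ ^ β - ρ₂ ^ β|) * C := by
    have := norm_integral_le_of_norm_le (hintC.const_mul (2 * |x| ^ r * |ρ₁ ^ β - ρ₂ ^ β|))
      (Filter.Eventually.of_forall hdiff)
    rwa [integral_const_mul] at this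
  have hPhi : Phi β p ρ₁ x - Phi β p ρ₂ x =
      (aConst p)⁻¹ * ((∫ u : ℝ, f ρ₁ u) - (∫ u : ℝ, f ρ₂ u)) := by
    simp only [Phi, hf_def]; ring
  rw [hPhi, abs_mul, hsub]
  have h1 : |∫ u : ℝ, (f ρ₁ u - f ρ₂ u)| ≤ (2 * |x| ^ r * |ρ₁ ^ β - ρ₂ ^ β|) * C := by
    rwa [Real.norm_eq_abs] at hnorm
  calc |(aConst p)⁻¹| * |∫ u : ℝ, (f ρ₁ u - f ρ₂ u)|
      ≤ |(aConst p)⁻¹| * ((2 * |x| ^ r * |ρ₁ ^ β - ρ₂ ^ β|) * C) :=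
        mul_le_mul_of_nonneg_left h1 (abs_nonneg _)
    _ = (2 * |(aConst p)⁻¹| * C) * |ρ₁ ^ β - ρ₂ ^ β| * |x| ^ r := by ring
    _ ≤ (2 * |(aConst p)⁻¹| * C + 1) * |ρ₁ ^ β - ρ₂ ^ β| * |x| ^ r := by
        have : (0:ℝ) ≤ |ρ₁ ^ β - ρ₂ ^ β| * |x| ^ r := by positivity
        nlinarith
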